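/- arXiv:1409.4988 — 2 statements merged into one kernel-verified Lean document; each statement's English description precedes it below -/
import Mathlib

section
/- Cheeger's inequality (hard direction): for a finite connected weighted graph, Φ(G) ≤ √(8(1 − λ₂)), where λ₂ is the second largest eigenvalue of the normalized adjacency matrix N. -/
open Matrix BigOperators
open Finset

set_option maxHeartbeats 1000000



lemma cheeger_eq_cut {n : ℕ} (A : Matrix (Fin n) (Fin n) ℝ) (hsym : A.IsSymm)
    (p : Fin n → Prop) [DecidablePred p] :
    ∑ i, ∑ j, A i j * |(if p i then (1:ℝ) else 0) - (if p j then 1 else 0)|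
      = 2 * ∑ x ∈ univ.filter p, ∑ y ∈ (univ.filter p)ᶜ, A x y := by
  have habs : ∀ i j, A i j * |(if p i then (1:ℝ) else 0) - (if p j then 1 else 0)|
      = (if p i ∧ ¬ p j then A i j else 0) + (if p j ∧ ¬ p i then A i j else 0) := by
    intro i j
    by_cases hi : p i <;> by_cases hj : p j <;> simp [hi, hj]
  have hcompl : (univ.filter p)ᶜ = univ.filter (fun x => ¬ p x) := Finset.compl_filter p
  have h1 : ∑ i, ∑ j, (if p i ∧ ¬ p j then A i j else 0)
      = ∑ x ∈ univ.filter p, ∑ y ∈ (univ.filter p)ᶜ, A x y := by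
    rw [hcompl, Finset.sum_filter]
    refine Finset.sum_congr rfl fun i _ => ?_
    by_cases hi : p i
    · rw [if_pos hi, Finset.sum_filter]
      refine Finset.sum_congr rfl fun j _ => ?_
      by_cases hj : p j <;> simp [hi, hj]
    · rw [if_neg hi]
      refine Finset.sum_eq_zero fun j _ => ?_
      simp [hi]
  have h2 : ∑ i, ∑ j, (if p j ∧ ¬ p i then A i j else 0)
      = ∑ x ∈ univ.filter p, ∑ y ∈ (univ.filter p)ᶜ, A x y := by
    rw [Finset.sum_comm]
    rw [← h1]
    refine Finset.sum_congr rfl fun j _ => Finset.sum_congr rfl fun i _ => ?_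
    rw [hsym.apply i j]
  simp_rw [habs, Finset.sum_add_distrib, h1, h2]
  ring

lemma cheeger_main_sweep {n : ℕ} (A : Matrix (Fin n) (Fin n) ℝ) (hsym : A.IsSymm)
    (d : Fin n → ℝ) (g : Fin n → ℝ) (hg0 : ∀ i, 0 ≤ g i)
    (hgz : ∃ i, 0 < g i) (hmin : ∃ i, g i = 0) (c : ℝ)
    (hCS : (∑ i, ∑ j, A i j * |g i - g j|) ≤ 2 * c * ∑ i, d i * g i) :
    ∃ S : Finset (Fin n), S.Nonempty ∧ (∀ i ∈ S, 0 < g i) ∧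
      (∑ x ∈ S, ∑ y ∈ Sᶜ, A x y) ≤ c * ∑ x ∈ S, d x := by
  obtain ⟨i₁, hi₁⟩ := hgz
  have hn : 0 < n := i₁.pos
  set σ : Equiv.Perm (Fin n) := Tuple.sort g with hσ
  have hmono0 : Monotone (g ∘ σ) := Tuple.monotone_sort g
  have hmono : ∀ {a b : Fin n}, a ≤ b → g (σ a) ≤ g (σ b) := fun h => hmono0 h
  set u : ℕ → ℝ := fun k => g (σ ⟨min k (n-1), by omega⟩) with hu
  have humono : Monotone u := by
    intro a b hab
    exact hmono (by simp only [Fin.mk_le_mk]; omega)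
  have hrange : ∀ i, ∃ K : Fin n, g i = g (σ K) := fun i => ⟨σ.symm i, by simp⟩
  have hval : ∀ K : Fin n, g (σ K) ≤ u (n-1) := by
    intro K
    exact hmono (show K ≤ ⟨min (n-1) (n-1), by omega⟩ by
      simp only [Fin.le_def]; omega)
  have hu0 : u 0 = 0 := by
    obtain ⟨i₀, hi₀⟩ := hmin
    have h1 : u 0 ≤ g (σ (σ.symm i₀)) := hmono (by simp only [Fin.le_def]; omega)
    rw [Equiv.apply_symm_apply, hi₀] at h1
    exact le_antisymm h1 (hg0 _)
  -- key pointwise layer-cake identity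
  have hukey : ∀ cv : ℝ, (∃ K : Fin n, cv = g (σ K)) →
      ∑ k ∈ range (n-1), (u (k+1) - u k) * (if u k < cv then 1 else 0) = cv := by
    rintro cv ⟨K, hK⟩
    have hterm : ∀ k ∈ range (n-1), (u (k+1) - u k) * (if u k < cv then 1 else 0)
        = min cv (u (k+1)) - min cv (u k) := by
      intro k hk
      simp only [mem_range] at hk
      by_cases h : u k < cv
      · have hkK : (⟨min k (n-1), by omega⟩ : Fin n) < K := by
          by_contra hle
          push_neg at hle
          have := hmono hle
          rw [← hK] at this
          exact absurd this (not_le.2 h)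
        have h2 : u (k+1) ≤ cv := by
          rw [hK]
          apply hmono
          simp only [Fin.le_def]
          have := Fin.lt_def.mp hkK
          simp only at this
          omega
        rw [if_pos h, min_eq_right h2, min_eq_right h.le]
        ring
      · push_neg at h
        have h2 : cv ≤ u (k+1) := le_trans h (humono (by omega))
        rw [if_neg (not_lt.2 h), min_eq_left h2, min_eq_left h]
        ring
    rw [Finset.sum_congr rfl hterm, Finset.sum_range_sub (fun k => min cv (u k))]
    have h1 : cv ≤ u (n-1) := hK ▸ hval K
    have h0 : 0 ≤ cv := hK ▸ hg0 _
    rw [hu0, min_eq_left h1, min_eq_right h0, sub_zero]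
  set S : ℕ → Finset (Fin n) := fun k => univ.filter (fun i => u k < g i) with hS
  -- Identity A
  have IdA : ∑ i, d i * g i = ∑ k ∈ range (n-1), (u (k+1) - u k) * ∑ x ∈ S k, d x := by
    have hperi : ∀ i, d i * g i
        = ∑ k ∈ range (n-1), (u (k+1) - u k) * (if u k < g i then d i else 0) := by
      intro i
      conv_lhs => rw [← hukey (g i) (hrange i)]
      rw [Finset.mul_sum]
      refine Finset.sum_congr rfl fun k _ => ?_
      by_cases h : u k < g i <;> simp [h] <;> ring
    rw [Finset.sum_congr rfl fun i _ => hperi i, Finset.sum_comm]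
    refine Finset.sum_congr rfl fun k _ => ?_
    rw [Finset.mul_sum, hS]
    rw [Finset.sum_filter]
    refine Finset.sum_congr rfl fun i _ => ?_
    by_cases h : u k < g i <;> simp [h]
  -- pointwise edge identity
  have hedge : ∀ i j, |g i - g j| = ∑ k ∈ range (n-1),
      (u (k+1) - u k) * |(if u k < g i then (1:ℝ) else 0) - (if u k < g j then 1 else 0)| := by
    have key : ∀ i j, g j ≤ g i → |g i - g j| = ∑ k ∈ range (n-1),
        (u (k+1) - u k) * |(if u k < g i then (1:ℝ) else 0) - (if u k < g j then 1 else 0)| := by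
      intro i j hij
      have hstep : ∀ k ∈ range (n-1),
          (u (k+1) - u k) * |(if u k < g i then (1:ℝ) else 0) - (if u k < g j then 1 else 0)|
          = (u (k+1) - u k) * (if u k < g i then 1 else 0)
            - (u (k+1) - u k) * (if u k < g j then 1 else 0) := by
        intro k _
        by_cases h1 : u k < g i
        · by_cases h2 : u k < g j <;> simp [h1, h2]
        · have h2 : ¬ u k < g j := fun h => h1 (lt_of_lt_of_le h hij)
          simp [h1, h2]
      rw [Finset.sum_congr rfl hstep, Finset.sum_sub_distrib,
        hukey _ (hrange i), hukey _ (hrange j), abs_of_nonneg (by linarith)]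
    intro i j
    rcases le_total (g j) (g i) with h | h
    · exact key i j h
    · rw [abs_sub_comm, key j i h]
      exact Finset.sum_congr rfl fun k _ => by rw [abs_sub_comm]
  -- Identity B
  have IdB : ∑ i, ∑ j, A i j * |g i - g j|
      = ∑ k ∈ range (n-1), (u (k+1) - u k) * (2 * ∑ x ∈ S k, ∑ y ∈ (S k)ᶜ, A x y) := by
    have step1 : ∑ i, ∑ j, A i j * |g i - g j|
        = ∑ i, ∑ j, ∑ k ∈ range (n-1), (u (k+1) - u k) *
          (A i j * |(if u k < g i then (1:ℝ) else 0) - (if u k < g j then 1 else 0)|) := by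
      refine Finset.sum_congr rfl fun i _ => Finset.sum_congr rfl fun j _ => ?_
      rw [hedge i j, Finset.mul_sum]
      exact Finset.sum_congr rfl fun k _ => by ring
    rw [step1]
    have swapin : ∀ i : Fin n, (∑ j, ∑ k ∈ range (n-1), (u (k+1) - u k) *
          (A i j * |(if u k < g i then (1:ℝ) else 0) - (if u k < g j then 1 else 0)|))
        = ∑ k ∈ range (n-1), ∑ j, (u (k+1) - u k) *
          (A i j * |(if u k < g i then (1:ℝ) else 0) - (if u k < g j then 1 else 0)|) :=
      fun i => Finset.sum_comm
    rw [Finset.sum_congr rfl (fun i _ => swapin i), Finset.sum_comm]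
    refine Finset.sum_congr rfl fun k hk => ?_
    have hcut := cheeger_eq_cut A hsym (fun i => u k < g i)
    have hpull : ∑ i, ∑ j, (u (k+1) - u k) *
          (A i j * |(if u k < g i then (1:ℝ) else 0) - (if u k < g j then 1 else 0)|)
        = (u (k+1) - u k) * ∑ i, ∑ j,
          A i j * |(if u k < g i then (1:ℝ) else 0) - (if u k < g j then 1 else 0)| := by
      rw [Finset.mul_sum]
      exact Finset.sum_congr rfl fun i _ => by rw [Finset.mul_sum]
    rw [hpull, hcut]
  -- total gap is positive
  have hgapsum : ∑ k ∈ range (n-1), (u (k+1) - u k) = u (n-1) - u 0 := Finset.sum_range_sub u (n-1)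
  have humax : 0 < u (n-1) := by
    have h1 : g i₁ ≤ u (n-1) := by
      obtain ⟨K, hK⟩ := hrange i₁
      exact hK ▸ hval K
    linarith
  by_contra hcon
  push_neg at hcon
  have hex : ∃ k ∈ range (n-1), u k < u (k+1) := by
    by_contra hnex
    push_neg at hnex
    have : ∑ k ∈ range (n-1), (u (k+1) - u k) ≤ 0 :=
      Finset.sum_nonpos fun k hk => by have := hnex k hk; linarith
    rw [hgapsum, hu0] at this
    linarith
  obtain ⟨k₀, hk₀mem, hk₀⟩ := hex
  have hSfact : ∀ k ∈ range (n-1), u k < u (k+1) →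
      (S k).Nonempty ∧ (∀ i ∈ S k, 0 < g i) := by
    intro k hk hlt
    simp only [mem_range] at hk
    constructor
    · refine ⟨σ ⟨min (k+1) (n-1), by omega⟩, ?_⟩
      simp only [hS, mem_filter, mem_univ, true_and]
      exact hlt
    · intro i hi
      simp only [hS, mem_filter] at hi
      have : u 0 ≤ u k := humono (Nat.zero_le k)
      rw [hu0] at this
      linarith [hi.2]
  have hstrict : ∀ k ∈ range (n-1),
      u k < u (k+1) → (∑ x ∈ S k, ∑ y ∈ (S k)ᶜ, A x y) > c * ∑ x ∈ S k, d x := by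
    intro k hk hlt
    obtain ⟨hne, hpos⟩ := hSfact k hk hlt
    exact hcon (S k) hne hpos
  have hterm2 : ∀ k ∈ range (n-1),
      (u (k+1) - u k) * (c * ∑ x ∈ S k, d x)
        ≤ (u (k+1) - u k) * (∑ x ∈ S k, ∑ y ∈ (S k)ᶜ, A x y) := by
    intro k hk
    rcases eq_or_lt_of_le (humono (Nat.le_succ k)) with h | h
    · rw [← h]; simp
    · exact mul_le_mul_of_nonneg_left (hstrict k hk h).le (by linarith)
  have hlt : ∑ k ∈ range (n-1), (u (k+1) - u k) * (c * ∑ x ∈ S k, d x)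
      < ∑ k ∈ range (n-1), (u (k+1) - u k) * (∑ x ∈ S k, ∑ y ∈ (S k)ᶜ, A x y) := by
    refine Finset.sum_lt_sum hterm2 ⟨k₀, hk₀mem, ?_⟩
    exact mul_lt_mul_of_pos_left (hstrict k₀ hk₀mem hk₀) (by linarith)
  have E3 : ∑ k ∈ range (n-1), (u (k+1) - u k) * (c * ∑ x ∈ S k, d x)
      = c * ∑ k ∈ range (n-1), (u (k+1) - u k) * ∑ x ∈ S k, d x := by
    rw [Finset.mul_sum]
    exact Finset.sum_congr rfl fun k _ => by ring
  have E4 : ∑ k ∈ range (n-1), (u (k+1) - u k) * (2 * ∑ x ∈ S k, ∑ y ∈ (S k)ᶜ, A x y)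
      = 2 * ∑ k ∈ range (n-1), (u (k+1) - u k) * ∑ x ∈ S k, ∑ y ∈ (S k)ᶜ, A x y := by
    rw [Finset.mul_sum]
    exact Finset.sum_congr rfl fun k _ => by ring
  rw [E3, ← IdA] at hlt
  rw [IdB, E4] at hCS
  linarith


lemma cheeger_cs {n : ℕ} (A : Matrix (Fin n) (Fin n) ℝ) (hsym : A.IsSymm)
    (hnn : ∀ i j, 0 ≤ A i j) (d : Fin n → ℝ) (hd : ∀ i, d i = ∑ j, A i j)
    (f : Fin n → ℝ) :
    ∑ i, ∑ j, A i j * |f i ^ 2 - f j ^ 2| ≤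
      2 * Real.sqrt ((∑ i, ∑ j, A i j * (f i - f j) ^ 2) * (∑ i, d i * f i ^ 2)) := by
  set P := ∑ i, ∑ j, A i j * (f i - f j) ^ 2 with hP
  set Q := ∑ i, d i * f i ^ 2 with hQ
  have hP0 : 0 ≤ P :=
    Finset.sum_nonneg fun i _ => Finset.sum_nonneg fun j _ =>
      mul_nonneg (hnn i j) (sq_nonneg _)
  set F : Fin n × Fin n → ℝ := fun p => Real.sqrt (A p.1 p.2) * |f p.1 - f p.2| with hF
  set G : Fin n × Fin n → ℝ := fun p => Real.sqrt (A p.1 p.2) * |f p.1 + f p.2| with hG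
  have hFG : ∑ i, ∑ j, A i j * |f i ^ 2 - f j ^ 2| = ∑ p : Fin n × Fin n, F p * G p := by
    rw [Fintype.sum_prod_type]
    refine Finset.sum_congr rfl fun i _ => Finset.sum_congr rfl fun j _ => ?_
    have h2 : F (i, j) * G (i, j)
        = (Real.sqrt (A i j) * Real.sqrt (A i j)) * (|f i - f j| * |f i + f j|) := by
      simp only [hF, hG]; ring
    have h1 : f i ^ 2 - f j ^ 2 = (f i - f j) * (f i + f j) := by ring
    rw [h2, Real.mul_self_sqrt (hnn i j), h1, abs_mul]
  have hF2 : ∑ p : Fin n × Fin n, F p ^ 2 = P := by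
    rw [hP, Fintype.sum_prod_type]
    refine Finset.sum_congr rfl fun i _ => Finset.sum_congr rfl fun j _ => ?_
    simp only [hF]
    rw [mul_pow, sq_abs, Real.sq_sqrt (hnn i j)]
  have hG2 : ∑ p : Fin n × Fin n, G p ^ 2 ≤ 4 * Q := by
    have hstep : ∑ p : Fin n × Fin n, G p ^ 2 ≤ ∑ i, ∑ j, A i j * (2 * f i ^ 2 + 2 * f j ^ 2) := by
      rw [Fintype.sum_prod_type]
      refine Finset.sum_le_sum fun i _ => Finset.sum_le_sum fun j _ => ?_
      simp only [hG]
      rw [mul_pow, sq_abs, Real.sq_sqrt (hnn i j)]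
      have : (f i + f j) ^ 2 ≤ 2 * f i ^ 2 + 2 * f j ^ 2 := by nlinarith [sq_nonneg (f i - f j)]
      exact mul_le_mul_of_nonneg_left this (hnn i j)
    have hsplit : ∑ i, ∑ j, A i j * (2 * f i ^ 2 + 2 * f j ^ 2) = 4 * Q := by
      have e1 : ∑ i, ∑ j, A i j * f i ^ 2 = Q := by
        rw [hQ]
        refine Finset.sum_congr rfl fun i _ => ?_
        rw [hd i, Finset.sum_mul]
      have e2 : ∑ i, ∑ j, A i j * f j ^ 2 = Q := by
        rw [Finset.sum_comm, hQ]
        refine Finset.sum_congr rfl fun j _ => ?_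
        have : ∑ i, A i j * f j ^ 2 = (∑ i, A j i) * f j ^ 2 := by
          rw [Finset.sum_mul]
          exact Finset.sum_congr rfl fun i _ => by rw [hsym.apply i j]
        rw [this, ← hd j]
      calc ∑ i, ∑ j, A i j * (2 * f i ^ 2 + 2 * f j ^ 2)
          = 2 * (∑ i, ∑ j, A i j * f i ^ 2) + 2 * (∑ i, ∑ j, A i j * f j ^ 2) := by
            simp_rw [Finset.mul_sum, ← Finset.sum_add_distrib]
            exact Finset.sum_congr rfl fun i _ => Finset.sum_congr rfl fun j _ => by ring
        _ = 4 * Q := by rw [e1, e2]; ring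
    linarith
  have hX0 : 0 ≤ ∑ p : Fin n × Fin n, F p * G p :=
    Finset.sum_nonneg fun p _ => mul_nonneg
      (mul_nonneg (Real.sqrt_nonneg _) (abs_nonneg _))
      (mul_nonneg (Real.sqrt_nonneg _) (abs_nonneg _))
  have hCS2 := Finset.sum_mul_sq_le_sq_mul_sq univ F G
  have hle : (∑ p : Fin n × Fin n, F p * G p) ^ 2 ≤ P * (4 * Q) := by
    calc (∑ p : Fin n × Fin n, F p * G p) ^ 2
        ≤ (∑ p : Fin n × Fin n, F p ^ 2) * (∑ p : Fin n × Fin n, G p ^ 2) := hCS2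
      _ ≤ P * (4 * Q) := by rw [hF2]; exact mul_le_mul_of_nonneg_left hG2 hP0
  rw [hFG]
  calc ∑ p : Fin n × Fin n, F p * G p
      = Real.sqrt ((∑ p : Fin n × Fin n, F p * G p) ^ 2) := (Real.sqrt_sq hX0).symm
    _ ≤ Real.sqrt (P * (4 * Q)) := Real.sqrt_le_sqrt hle
    _ = 2 * Real.sqrt (P * Q) := by
        rw [show P * (4 * Q) = 4 * (P * Q) by ring,
          Real.sqrt_mul (by norm_num : (0:ℝ) ≤ 4),
          show Real.sqrt 4 = 2 by
            rw [show (4:ℝ) = 2 ^ 2 by norm_num, Real.sqrt_sq (by norm_num : (0:ℝ) ≤ 2)]]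


lemma cheeger_pm_sq (a : ℝ) : max a 0 ^ 2 + max (-a) 0 ^ 2 = a ^ 2 := by
  rcases le_total a 0 with h | h
  · rw [max_eq_right h, max_eq_left (by linarith : (0:ℝ) ≤ -a)]
    ring
  · rw [max_eq_left h, max_eq_right (by linarith : -a ≤ (0:ℝ))]
    ring

lemma cheeger_pm_diff (a b : ℝ) :
    (max a 0 - max b 0) ^ 2 + (max (-a) 0 - max (-b) 0) ^ 2 ≤ (a - b) ^ 2 := by
  rcases le_total a 0 with ha | ha <;> rcases le_total b 0 with hb | hb
  · rw [max_eq_right ha, max_eq_right hb, max_eq_left (by linarith : (0:ℝ) ≤ -a),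
      max_eq_left (by linarith : (0:ℝ) ≤ -b)]
    nlinarith
  · rw [max_eq_right ha, max_eq_left hb, max_eq_left (by linarith : (0:ℝ) ≤ -a),
      max_eq_right (by linarith : -b ≤ (0:ℝ))]
    nlinarith [mul_nonneg (neg_nonneg.2 ha) hb]
  · rw [max_eq_left ha, max_eq_right hb, max_eq_right (by linarith : -a ≤ (0:ℝ)),
      max_eq_left (by linarith : (0:ℝ) ≤ -b)]
    nlinarith [mul_nonneg ha (neg_nonneg.2 hb)]
  · rw [max_eq_left ha, max_eq_left hb, max_eq_right (by linarith : -a ≤ (0:ℝ)),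
      max_eq_right (by linarith : -b ≤ (0:ℝ))]
    nlinarith


/-- Cheeger's inequality, hard direction: `Φ(G) ≤ √(8(1 - λ₂))` for a finite connected
weighted graph, where `λ₂` is the second largest eigenvalue of `N = D^{-1/2} A D^{-1/2}`
(characterized as the largest eigenvalue on the orthogonal complement of the top
eigenvector `w i = √(deg i)`). -/
theorem cheeger_hard_direction {n : ℕ} (hn : 2 ≤ n)
    (A : Matrix (Fin n) (Fin n) ℝ) (hsym : A.IsSymm) (hnn : ∀ i j, 0 ≤ A i j)
    (deg : Fin n → ℝ) (hdeg : ∀ i, deg i = ∑ j, A i j) (hdpos : ∀ i, 0 < deg i)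
    (hconn : ∀ S : Finset (Fin n), S.Nonempty → S ≠ Finset.univ →
      ∃ u ∈ S, ∃ vtx ∈ Sᶜ, 0 < A u vtx)
    (N : Matrix (Fin n) (Fin n) ℝ)
    (hN : ∀ i j, N i j = A i j / (Real.sqrt (deg i) * Real.sqrt (deg j)))
    (w : Fin n → ℝ) (hw : ∀ i, w i = Real.sqrt (deg i))
    (lam2 : ℝ) (v2 : Fin n → ℝ) (hv2 : v2 ≠ 0) (hv2w : v2 ⬝ᵥ w = 0)
    (heig : N.mulVec v2 = lam2 • v2)
    (hmax : ∀ (μ : ℝ) (x : Fin n → ℝ), x ≠ 0 → x ⬝ᵥ w = 0 →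
      N.mulVec x = μ • x → μ ≤ lam2)
    (cut vol : Finset (Fin n) → ℝ)
    (hcut : ∀ S, cut S = ∑ u ∈ S, ∑ v ∈ Sᶜ, A u v)
    (hvol : ∀ S, vol S = ∑ u ∈ S, ∑ v, A u v)
    (phi : Finset (Fin n) → ℝ)
    (hphi : ∀ S, phi S = cut S / min (vol S) (vol Sᶜ))
    (cand : Finset (Finset (Fin n)))
    (hcand : cand = Finset.univ.filter (fun S => S.Nonempty ∧ S ≠ Finset.univ))
    (hne : cand.Nonempty) :
    cand.inf' hne phi ≤ Real.sqrt (8 * (1 - lam2)) := by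
  classical
  haveI : Nonempty (Fin n) := ⟨⟨0, by omega⟩⟩
  have hsd : ∀ i, 0 < Real.sqrt (deg i) := fun i => Real.sqrt_pos.2 (hdpos i)
  set y : Fin n → ℝ := fun i => v2 i / Real.sqrt (deg i) with hy
  have hv2y : ∀ i, v2 i = Real.sqrt (deg i) * y i := by
    intro i
    rw [hy]
    rw [mul_comm]
    exact (div_mul_cancel₀ (v2 i) (ne_of_gt (hsd i))).symm
  have heig' : ∀ i, ∑ j, N i j * v2 j = lam2 * v2 i := by
    intro i
    have := congrFun heig i
    simpa [Matrix.mulVec, dotProduct] using this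
  -- A y = lam2 D y
  have hAy : ∀ i, ∑ j, A i j * y j = lam2 * (deg i * y i) := by
    intro i
    have termeq : ∀ j, N i j * v2 j = (A i j * y j) / Real.sqrt (deg i) := by
      intro j
      rw [hN i j, hv2y j]
      field_simp [ne_of_gt (hsd i), ne_of_gt (hsd j)]
    have h2 : ∑ j, (A i j * y j) / Real.sqrt (deg i) = lam2 * v2 i := by
      rw [← heig' i]
      exact Finset.sum_congr rfl fun j _ => (termeq j).symm
    rw [← Finset.sum_div, hv2y i] at h2
    rw [div_eq_iff (ne_of_gt (hsd i))] at h2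
    rw [h2]
    have hss : Real.sqrt (deg i) * Real.sqrt (deg i) = deg i := Real.mul_self_sqrt (hdpos i).le
    calc lam2 * (Real.sqrt (deg i) * y i) * Real.sqrt (deg i)
        = lam2 * ((Real.sqrt (deg i) * Real.sqrt (deg i)) * y i) := by ring
      _ = lam2 * (deg i * y i) := by rw [hss]
  -- orthogonality
  have hdy0 : ∑ i, deg i * y i = 0 := by
    have h1 : ∑ i, v2 i * w i = 0 := hv2w
    rw [← h1]
    refine Finset.sum_congr rfl fun i _ => ?_
    rw [hw i, hv2y i]
    have hss : Real.sqrt (deg i) * Real.sqrt (deg i) = deg i := Real.mul_self_sqrt (hdpos i).le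
    calc deg i * y i = (Real.sqrt (deg i) * Real.sqrt (deg i)) * y i := by rw [hss]
      _ = Real.sqrt (deg i) * y i * Real.sqrt (deg i) := by ring
  set Qy := ∑ i, deg i * y i ^ 2 with hQydef
  have hQy_eq : Qy = ∑ i, v2 i ^ 2 := by
    refine Finset.sum_congr rfl fun i _ => ?_
    rw [hv2y i]
    have hss : Real.sqrt (deg i) * Real.sqrt (deg i) = deg i := Real.mul_self_sqrt (hdpos i).le
    calc deg i * y i ^ 2 = (Real.sqrt (deg i) * Real.sqrt (deg i)) * y i ^ 2 := by rw [hss]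
      _ = (Real.sqrt (deg i) * y i) ^ 2 := by ring
  have hQypos : 0 < Qy := by
    rw [hQy_eq]
    obtain ⟨i, hi⟩ := Function.ne_iff.mp hv2
    exact Finset.sum_pos' (fun j _ => sq_nonneg _)
      ⟨i, Finset.mem_univ i, pow_two_pos_of_ne_zero (by simpa using hi)⟩
  set Ey := ∑ i, ∑ j, A i j * (y i - y j) ^ 2 with hEydef
  -- Ey = 2(1-lam2) Qy
  have hEy : Ey = 2 * (1 - lam2) * Qy := by
    have T1 : ∑ i, ∑ j, A i j * y i ^ 2 = Qy := by
      refine Finset.sum_congr rfl fun i _ => ?_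
      rw [hdeg i, Finset.sum_mul]
    have T2 : ∑ i, ∑ j, A i j * y j ^ 2 = Qy := by
      rw [Finset.sum_comm]
      refine Finset.sum_congr rfl fun j _ => ?_
      have : ∑ i, A i j * y j ^ 2 = (∑ i, A j i) * y j ^ 2 := by
        rw [Finset.sum_mul]
        exact Finset.sum_congr rfl fun i _ => by rw [hsym.apply i j]
      rw [this, ← hdeg j]
    have T3 : ∑ i, ∑ j, A i j * (y i * y j) = lam2 * Qy := by
      have : ∀ i, ∑ j, A i j * (y i * y j) = y i * (lam2 * (deg i * y i)) := by
        intro i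
        rw [← hAy i, Finset.mul_sum]
        exact Finset.sum_congr rfl fun j _ => by ring
      rw [Finset.sum_congr rfl fun i _ => this i, hQydef, Finset.mul_sum]
      exact Finset.sum_congr rfl fun i _ => by ring
    have hsplit : Ey = (∑ i, ∑ j, A i j * y i ^ 2) + (∑ i, ∑ j, A i j * y j ^ 2)
        - 2 * (∑ i, ∑ j, A i j * (y i * y j)) := by
      rw [hEydef, Finset.mul_sum, ← Finset.sum_add_distrib, ← Finset.sum_sub_distrib]
      refine Finset.sum_congr rfl fun i _ => ?_
      rw [Finset.mul_sum, ← Finset.sum_add_distrib, ← Finset.sum_sub_distrib]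
      exact Finset.sum_congr rfl fun j _ => by ring
    rw [hsplit, T1, T2, T3]
    ring
  set V := ∑ i, deg i with hVdef
  have hV : 0 < V := Finset.sum_pos (fun i _ => hdpos i) Finset.univ_nonempty
  -- median
  set cSet : Finset ℝ := (Finset.image y Finset.univ).filter
      (fun t => V / 2 ≤ ∑ i ∈ Finset.univ.filter (fun i => y i ≤ t), deg i) with hcSet
  have hcne : cSet.Nonempty := by
    have himne : (Finset.image y Finset.univ).Nonempty :=
      Finset.Nonempty.image Finset.univ_nonempty y
    refine ⟨(Finset.image y Finset.univ).max' himne, ?_⟩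
    rw [hcSet, Finset.mem_filter]
    refine ⟨Finset.max'_mem _ _, ?_⟩
    have : Finset.univ.filter (fun i => y i ≤ (Finset.image y Finset.univ).max' himne)
        = Finset.univ := by
      refine Finset.eq_univ_iff_forall.mpr fun i => ?_
      rw [Finset.mem_filter]
      exact ⟨Finset.mem_univ i, Finset.le_max' _ _ (Finset.mem_image_of_mem y (Finset.mem_univ i))⟩
    rw [this, ← hVdef]
    linarith
  set m := cSet.min' hcne with hm
  have hm_mem : m ∈ cSet := cSet.min'_mem hcne
  have hm_prop : V / 2 ≤ ∑ i ∈ Finset.univ.filter (fun i => y i ≤ m), deg i := by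
    rw [hcSet] at hm_mem
    exact (Finset.mem_filter.mp hm_mem).2
  have hup : ∑ i ∈ Finset.univ.filter (fun i => m < y i), deg i ≤ V / 2 := by
    have hpart := Finset.sum_filter_add_sum_filter_not Finset.univ (fun i => y i ≤ m) deg
    have hePred : Finset.univ.filter (fun i => ¬ y i ≤ m) = Finset.univ.filter (fun i => m < y i) := by
      apply Finset.filter_congr
      intro i _
      simp [not_le]
    rw [hePred] at hpart
    rw [← hVdef] at hpart
    linarith
  have hlow : ∑ i ∈ Finset.univ.filter (fun i => y i < m), deg i ≤ V / 2 := by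
    rcases (Finset.univ.filter (fun i => y i < m)).eq_empty_or_nonempty with he | hne'
    · rw [he, Finset.sum_empty]; linarith
    · have himne : ((Finset.univ.filter (fun i => y i < m)).image y).Nonempty :=
        Finset.Nonempty.image hne' y
      set c' := ((Finset.univ.filter (fun i => y i < m)).image y).max' himne with hc'
      obtain ⟨i₀, hi₀mem, hi₀⟩ := Finset.mem_image.mp (Finset.max'_mem _ himne)
      have hc'lt : c' < m := by
        rw [hc', ← hi₀]
        exact (Finset.mem_filter.mp hi₀mem).2
      have hc'img : c' ∈ Finset.image y Finset.univ := by
        rw [hc', ← hi₀]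
        exact Finset.mem_image_of_mem y (Finset.mem_univ i₀)
      have hc'not : c' ∉ cSet := by
        intro hcmem
        exact absurd (cSet.min'_le c' hcmem) (not_le.2 (hm ▸ hc'lt))
      have hc'small : ∑ i ∈ Finset.univ.filter (fun i => y i ≤ c'), deg i < V / 2 := by
        by_contra hge
        push_neg at hge
        exact hc'not (by rw [hcSet, Finset.mem_filter]; exact ⟨hc'img, hge⟩)
      have hsub : Finset.univ.filter (fun i => y i < m) ⊆ Finset.univ.filter (fun i => y i ≤ c') := by
        intro i hi
        exact Finset.mem_filter.mpr ⟨Finset.mem_univ i,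
          hc' ▸ Finset.le_max' _ _ (Finset.mem_image_of_mem y hi)⟩
      have := Finset.sum_le_sum_of_subset_of_nonneg hsub (fun i _ _ => (hdpos i).le)
      linarith
  -- shifted vector
  set g : Fin n → ℝ := fun i => y i - m with hg
  set Eg := ∑ i, ∑ j, A i j * (g i - g j) ^ 2 with hEgdef
  set Qg := ∑ i, deg i * g i ^ 2 with hQgdef
  have hEg_eq : Eg = Ey := by
    rw [hEgdef, hEydef]
    refine Finset.sum_congr rfl fun i _ => Finset.sum_congr rfl fun j _ => ?_
    simp only [hg]
    ring
  have hQg_eq : Qg = Qy + m ^ 2 * V := by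
    have h1 : Qg = (∑ i, deg i * y i ^ 2) - 2 * m * (∑ i, deg i * y i)
        + m ^ 2 * (∑ i, deg i) := by
      rw [hQgdef, Finset.mul_sum, Finset.mul_sum, ← Finset.sum_sub_distrib,
        ← Finset.sum_add_distrib]
      refine Finset.sum_congr rfl fun i _ => ?_
      simp only [hg]
      ring
    rw [h1, hdy0, ← hQydef, ← hVdef]
    ring
  have hmV : 0 ≤ m ^ 2 * V := mul_nonneg (sq_nonneg m) hV.le
  have hQgpos : 0 < Qg := by linarith
  have hQy_le_Qg : Qy ≤ Qg := by linarith
  -- positive and negative parts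
  set fp : Fin n → ℝ := fun i => max (g i) 0 with hfp
  set fm : Fin n → ℝ := fun i => max (-g i) 0 with hfm
  set Efp := ∑ i, ∑ j, A i j * (fp i - fp j) ^ 2 with hEfpdef
  set Efm := ∑ i, ∑ j, A i j * (fm i - fm j) ^ 2 with hEfmdef
  set Qfp := ∑ i, deg i * fp i ^ 2 with hQfpdef
  set Qfm := ∑ i, deg i * fm i ^ 2 with hQfmdef
  have hQsplit : Qg = Qfp + Qfm := by
    rw [hQgdef, hQfpdef, hQfmdef, ← Finset.sum_add_distrib]
    refine Finset.sum_congr rfl fun i _ => ?_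
    simp only [hfp, hfm]
    rw [← cheeger_pm_sq (g i)]
    ring
  have hEsplit : Efp + Efm ≤ Eg := by
    rw [hEfpdef, hEfmdef, hEgdef, ← Finset.sum_add_distrib]
    refine Finset.sum_le_sum fun i _ => ?_
    rw [← Finset.sum_add_distrib]
    refine Finset.sum_le_sum fun j _ => ?_
    have hkey : (fp i - fp j) ^ 2 + (fm i - fm j) ^ 2 ≤ (g i - g j) ^ 2 := by
      simp only [hfp, hfm]
      exact cheeger_pm_diff (g i) (g j)
    nlinarith [mul_nonneg (hnn i j) (sub_nonneg.2 hkey)]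
  have hEfp0 : 0 ≤ Efp := Finset.sum_nonneg fun i _ => Finset.sum_nonneg fun j _ =>
    mul_nonneg (hnn i j) (sq_nonneg _)
  have hEfm0 : 0 ≤ Efm := Finset.sum_nonneg fun i _ => Finset.sum_nonneg fun j _ =>
    mul_nonneg (hnn i j) (sq_nonneg _)
  have hQfp0 : 0 ≤ Qfp := Finset.sum_nonneg fun i _ => mul_nonneg (hdpos i).le (sq_nonneg _)
  have hQfm0 : 0 ≤ Qfm := Finset.sum_nonneg fun i _ => mul_nonneg (hdpos i).le (sq_nonneg _)
  have hside_p : ∀ i, 0 < fp i → m < y i := by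
    intro i hi
    by_contra hmy
    push_neg at hmy
    have hz : fp i = 0 := by
      simp only [hfp, hg]
      exact max_eq_right (by linarith)
    rw [hz] at hi
    exact lt_irrefl 0 hi
  have hside_m : ∀ i, 0 < fm i → y i < m := by
    intro i hi
    by_contra hmy
    push_neg at hmy
    have hz : fm i = 0 := by
      simp only [hfm, hg]
      exact max_eq_right (by linarith)
    rw [hz] at hi
    exact lt_irrefl 0 hi
  -- choose the good side
  obtain ⟨f, hf0, hside, hQfpos, hEQ⟩ :
      ∃ f : Fin n → ℝ, (∀ i, 0 ≤ f i) ∧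
        ((∀ i, 0 < f i → m < y i) ∨ (∀ i, 0 < f i → y i < m)) ∧
        (0 < ∑ i, deg i * f i ^ 2) ∧
        (∑ i, ∑ j, A i j * (f i - f j) ^ 2) * Qg ≤ Eg * (∑ i, deg i * f i ^ 2) := by
    by_cases hcase : 0 < Qfp ∧ Efp * Qg ≤ Eg * Qfp
    · refine ⟨fp, fun i => le_max_right _ _, Or.inl hside_p, ?_, ?_⟩
      · rw [← hQfpdef]; exact hcase.1
      · rw [← hQfpdef, ← hEfpdef]; exact hcase.2
    · push_neg at hcase
      rcases lt_or_ge 0 Qfp with hp | hp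
      · have hlt : Eg * Qfp < Efp * Qg := hcase hp
        have h1 : Efp * Qg + Efm * Qg ≤ Eg * Qg := by
          have := mul_le_mul_of_nonneg_right hEsplit hQgpos.le
          rw [add_mul] at this
          exact this
        have h2 : Eg * Qg = Eg * Qfp + Eg * Qfm := by rw [hQsplit]; ring
        have hEfm_lt : Efm * Qg < Eg * Qfm := by linarith
        have hQfm_pos : 0 < Qfm := by
          rcases eq_or_lt_of_le hQfm0 with hq | hq
          · exfalso
            rw [← hq, mul_zero] at hEfm_lt
            linarith [mul_nonneg hEfm0 hQgpos.le]
          · exact hq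
        refine ⟨fm, fun i => le_max_right _ _, Or.inr hside_m, ?_, ?_⟩
        · rw [← hQfmdef]; exact hQfm_pos
        · rw [← hQfmdef, ← hEfmdef]; exact hEfm_lt.le
      · have hQfp_eq : Qfp = 0 := le_antisymm hp hQfp0
        have hQfm_eq : Qfm = Qg := by rw [hQsplit, hQfp_eq]; ring
        refine ⟨fm, fun i => le_max_right _ _, Or.inr hside_m, ?_, ?_⟩
        · rw [← hQfmdef, hQfm_eq]; exact hQgpos
        · rw [← hQfmdef, ← hEfmdef, hQfm_eq]
          exact mul_le_mul_of_nonneg_right (by linarith) hQgpos.le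
  set Ef := ∑ i, ∑ j, A i j * (f i - f j) ^ 2 with hEfdef
  set Qf := ∑ i, deg i * f i ^ 2 with hQfdef
  have hEf0 : 0 ≤ Ef := Finset.sum_nonneg fun i _ => Finset.sum_nonneg fun j _ =>
    mul_nonneg (hnn i j) (sq_nonneg _)
  have hvolsupp : ∑ i ∈ Finset.univ.filter (fun i => 0 < f i), deg i ≤ V / 2 := by
    rcases hside with hs | hs
    · have hsub : Finset.univ.filter (fun i => 0 < f i)
          ⊆ Finset.univ.filter (fun i => m < y i) :=
        fun i hi => Finset.mem_filter.mpr ⟨Finset.mem_univ i, hs i (Finset.mem_filter.mp hi).2⟩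
      exact le_trans
        (Finset.sum_le_sum_of_subset_of_nonneg hsub fun i _ _ => (hdpos i).le) hup
    · have hsub : Finset.univ.filter (fun i => 0 < f i)
          ⊆ Finset.univ.filter (fun i => y i < m) :=
        fun i hi => Finset.mem_filter.mpr ⟨Finset.mem_univ i, hs i (Finset.mem_filter.mp hi).2⟩
      exact le_trans
        (Finset.sum_le_sum_of_subset_of_nonneg hsub fun i _ _ => (hdpos i).le) hlow
  have hEf_le : Ef ≤ 2 * (1 - lam2) * Qf := by
    have h1 : Ef * Qy ≤ Ef * Qg := mul_le_mul_of_nonneg_left hQy_le_Qg hEf0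
    have h3 : Eg = 2 * (1 - lam2) * Qy := by rw [hEg_eq, hEy]
    have h4 : Ef * Qy ≤ (2 * (1 - lam2) * Qf) * Qy := by
      calc Ef * Qy ≤ Eg * Qf := le_trans h1 hEQ
        _ = (2 * (1 - lam2) * Qf) * Qy := by rw [h3]; ring
    exact le_of_mul_le_mul_right h4 hQypos
  have h1lam : 0 ≤ 1 - lam2 := by nlinarith
  set c := Real.sqrt (Ef * Qf) / Qf with hc
  have hc0 : 0 ≤ c := div_nonneg (Real.sqrt_nonneg _) hQfpos.le
  have hCS' : (∑ i, ∑ j, A i j * |f i ^ 2 - f j ^ 2|) ≤ 2 * c * Qf := by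
    have hcs := cheeger_cs A hsym hnn deg hdeg f
    have heq : 2 * c * Qf = 2 * Real.sqrt (Ef * Qf) := by
      rw [hc]
      field_simp
    rw [heq]
    exact hcs
  have hfpos : ∃ i, 0 < f i := by
    by_contra hh
    push_neg at hh
    have : Qf = 0 := by
      rw [hQfdef]
      refine Finset.sum_eq_zero fun i _ => ?_
      have : f i = 0 := le_antisymm (hh i) (hf0 i)
      rw [this]
      ring
    linarith
  have hfz : ∃ i, f i = 0 := by
    by_contra hh
    push_neg at hh
    have hall : ∀ i, 0 < f i := fun i => lt_of_le_of_ne (hf0 i) (Ne.symm (hh i))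
    have : Finset.univ.filter (fun i => 0 < f i) = Finset.univ :=
      Finset.eq_univ_iff_forall.mpr fun i => Finset.mem_filter.mpr ⟨Finset.mem_univ i, hall i⟩
    rw [this, ← hVdef] at hvolsupp
    linarith
  obtain ⟨S, hSne, hSpos, hScut⟩ := cheeger_main_sweep A hsym deg (fun i => f i ^ 2)
    (fun i => sq_nonneg _)
    (by obtain ⟨i, hi⟩ := hfpos; exact ⟨i, by positivity⟩)
    (by obtain ⟨i, hi⟩ := hfz; exact ⟨i, by show f i ^ 2 = 0; rw [hi]; ring⟩)
    c (by simpa using hCS')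
  have hvolSpos : 0 < ∑ x ∈ S, deg x := Finset.sum_pos (fun i _ => hdpos i) hSne
  have hSsub : S ⊆ Finset.univ.filter (fun i => 0 < f i) := by
    intro i hi
    refine Finset.mem_filter.mpr ⟨Finset.mem_univ i, ?_⟩
    have h2 : (0:ℝ) < f i ^ 2 := by simpa using hSpos i hi
    have hne0 : f i ≠ 0 := by
      intro h0
      rw [h0] at h2
      simp at h2
    exact lt_of_le_of_ne (hf0 i) (Ne.symm hne0)
  have hvolS_half : (∑ x ∈ S, deg x) ≤ V / 2 :=
    le_trans (Finset.sum_le_sum_of_subset_of_nonneg hSsub fun i _ _ => (hdpos i).le) hvolsupp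
  have hSne_univ : S ≠ Finset.univ := by
    intro h
    rw [h, ← hVdef] at hvolS_half
    linarith
  have hvol_S : vol S = ∑ x ∈ S, deg x := by
    rw [hvol S]
    exact Finset.sum_congr rfl fun u _ => (hdeg u).symm
  have hvol_Sc : vol Sᶜ = V - ∑ x ∈ S, deg x := by
    rw [hvol Sᶜ]
    have h1 : ∑ u ∈ Sᶜ, ∑ v, A u v = ∑ u ∈ Sᶜ, deg u :=
      Finset.sum_congr rfl fun u _ => (hdeg u).symm
    have h2 : ∑ u ∈ S, deg u + ∑ u ∈ Sᶜ, deg u = ∑ u, deg u := Finset.sum_add_sum_compl S deg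
    rw [h1, ← hVdef] at *
    linarith
  have hmin_eq : min (vol S) (vol Sᶜ) = ∑ x ∈ S, deg x := by
    rw [hvol_S, hvol_Sc]
    exact min_eq_left (by linarith)
  have hphiS : phi S ≤ c := by
    rw [hphi S, hmin_eq, hcut S, div_le_iff₀ hvolSpos]
    exact hScut
  have hmem : S ∈ cand := by
    rw [hcand]
    exact Finset.mem_filter.mpr ⟨Finset.mem_univ S, hSne, hSne_univ⟩
  have hfinal : c ≤ Real.sqrt (8 * (1 - lam2)) := by
    refine (Real.le_sqrt hc0 (by linarith only [h1lam] : (0:ℝ) ≤ 8 * (1 - lam2))).mpr ?_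
    rw [hc, div_pow, Real.sq_sqrt (mul_nonneg hEf0 hQfpos.le),
      div_le_iff₀ (by positivity : (0:ℝ) < Qf ^ 2)]
    have e1 : Ef * Qf ≤ (2 * (1 - lam2) * Qf) * Qf :=
      mul_le_mul_of_nonneg_right hEf_le hQfpos.le
    have e3 : 0 ≤ (1 - lam2) * Qf ^ 2 := mul_nonneg h1lam (sq_nonneg Qf)
    linarith only [e1, e3]
  exact le_trans (Finset.inf'_le phi hmem) (le_trans hphiS hfinal)
end

section
/- Power method convergence: for a real positive semidefinite symmetric n×n matrix M̃ with largest eigenvalue λ₁ and a unit vector x₀ whose component along a top eigenvector v₁ satisfies |⟨x₀, v₁⟩| ≥ δ > 0, the Rayleigh quotient of xₜ = M̃ᵗ x₀ satisfies (xₜᵀ M̃ xₜ)/(xₜᵀ xₜ) ≥ λ₁ (1−ε) · 1/(1 + δ⁻²(1−ε)^{2t}) for any ε ∈ (0,1). -/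
open Matrix BigOperators

/-- Power method convergence: for a real symmetric PSD matrix with orthonormal
eigenbasis `v`, eigenvalues `lam` with top eigenvalue `lam 0`, and a unit starting
vector with `|⟨x₀, v₁⟩| ≥ δ > 0`, the Rayleigh quotient of `xₜ = M̃ᵗ x₀` satisfies
`R(xₜ) ≥ λ₁(1-ε) · 1/(1 + δ⁻²(1-ε)^{2t})` for any `ε ∈ (0,1)`. -/
theorem power_method_rayleigh_bound {n : ℕ}
    (M : Matrix (Fin (n + 1)) (Fin (n + 1)) ℝ) (hsym : M.IsSymm)
    (v : Fin (n + 1) → Fin (n + 1) → ℝ) (lam : Fin (n + 1) → ℝ)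
    (hortho : ∀ i j, v i ⬝ᵥ v j = if i = j then (1 : ℝ) else 0)
    (heig : ∀ i, M.mulVec (v i) = lam i • v i)
    (hnn : ∀ i, 0 ≤ lam i) (htop : ∀ i, lam i ≤ lam 0)
    (x0 : Fin (n + 1) → ℝ) (hx0 : x0 ⬝ᵥ x0 = 1)
    (δ : ℝ) (hδ : 0 < δ) (hcomp : δ ≤ |x0 ⬝ᵥ v 0|)
    (ε : ℝ) (hε0 : 0 < ε) (hε1 : ε < 1) (t : ℕ)
    (xt : Fin (n + 1) → ℝ) (hxt : xt = (M ^ t).mulVec x0) (hxtne : xt ≠ 0) :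
    lam 0 * (1 - ε) * (1 / (1 + (δ⁻¹) ^ 2 * (1 - ε) ^ (2 * t))) ≤
      (xt ⬝ᵥ M.mulVec xt) / (xt ⬝ᵥ xt) := by
  classical
  set α : Fin (n + 1) → ℝ := fun i => v i ⬝ᵥ x0 with hαdef
  -- basis expansion of x0
  set V : Matrix (Fin (n+1)) (Fin (n+1)) ℝ := Matrix.of v with hV
  have h1 : V * Vᵀ = 1 := by
    ext i j
    simpa [Matrix.mul_apply, Matrix.one_apply, hV, dotProduct] using hortho i j
  have h2 : Vᵀ * V = 1 := mul_eq_one_comm.mp h1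
  have key : Vᵀ.mulVec (V.mulVec x0) = x0 := by
    rw [Matrix.mulVec_mulVec, h2, Matrix.one_mulVec]
  have expand : Vᵀ.mulVec (V.mulVec x0) = ∑ i, α i • v i := by
    funext j
    simp [Matrix.mulVec, dotProduct, hV, hαdef, Finset.sum_apply, mul_comm]
  have hx0exp : x0 = ∑ i, α i • v i := by rw [← expand]; exact key.symm
  -- dot products of combinations
  have dsum : ∀ (u : Fin (n+1) → ℝ) (f : Fin (n+1) → Fin (n+1) → ℝ),
      u ⬝ᵥ (∑ j, f j) = ∑ j, u ⬝ᵥ f j := by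
    intro u f
    simp only [dotProduct, Finset.sum_apply, Finset.mul_sum]
    exact Finset.sum_comm
  have hdot : ∀ a b : Fin (n + 1) → ℝ,
      (∑ i, a i • v i) ⬝ᵥ (∑ j, b j • v j) = ∑ i, a i * b i := by
    intro a b
    rw [dotProduct_comm, dsum]
    refine Finset.sum_congr rfl fun i _ => ?_
    rw [dotProduct_smul, dotProduct_comm, dsum]
    simp [dotProduct_smul, hortho, mul_ite, Finset.sum_ite_eq, mul_comm]
  -- eigen powers
  have heigpow : ∀ (s : ℕ) (i : Fin (n+1)), (M ^ s).mulVec (v i) = (lam i ^ s) • v i := by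
    intro s i
    induction s with
    | zero => simp
    | succ s ih =>
      rw [pow_succ, ← Matrix.mulVec_mulVec, heig i, Matrix.mulVec_smul, ih, smul_smul,
        mul_comm, ← pow_succ]
  -- expansion of xt
  have hxt_exp : xt = ∑ i, (α i * lam i ^ t) • v i := by
    rw [hxt, hx0exp]
    rw [show (M ^ t).mulVec (∑ i, α i • v i)
        = (M ^ t).mulVecLin (∑ i, α i • v i) from rfl, map_sum]
    refine Finset.sum_congr rfl fun i _ => ?_
    rw [_root_.map_smul, Matrix.mulVecLin_apply, heigpow t i, smul_smul]
  have hMxt : M.mulVec xt = ∑ i, (α i * lam i ^ t * lam i) • v i := by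
    rw [hxt_exp, show M.mulVec (∑ i, (α i * lam i ^ t) • v i)
        = M.mulVecLin (∑ i, (α i * lam i ^ t) • v i) from rfl, map_sum]
    refine Finset.sum_congr rfl fun i _ => ?_
    rw [_root_.map_smul, Matrix.mulVecLin_apply, heig i, smul_smul]
  -- the coefficients
  set c : Fin (n + 1) → ℝ := fun i => α i ^ 2 * lam i ^ (2 * t) with hcdef
  have hsq : ∀ i, (α i * lam i ^ t) * (α i * lam i ^ t) = c i := by
    intro i
    show _ = α i ^ 2 * lam i ^ (2 * t)
    rw [show lam i ^ (2 * t) = (lam i ^ t) ^ 2 by rw [← pow_mul, mul_comm]]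
    ring
  have hD : xt ⬝ᵥ xt = ∑ i, c i := by
    rw [hxt_exp, hdot]
    exact Finset.sum_congr rfl fun i _ => hsq i
  have hN : xt ⬝ᵥ M.mulVec xt = ∑ i, c i * lam i := by
    rw [hMxt, hxt_exp, hdot]
    refine Finset.sum_congr rfl fun i _ => ?_
    rw [← hsq i]; ring
  have hcnn : ∀ i, 0 ≤ c i := fun i =>
    mul_nonneg (sq_nonneg _) (pow_nonneg (hnn i) _)
  have hsum1 : ∑ i, α i ^ 2 = 1 := by
    have := hdot α α
    rw [← hx0exp, hx0] at this
    calc ∑ i, α i ^ 2 = ∑ i, α i * α i := Finset.sum_congr rfl fun i _ => by ring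
    _ = 1 := this.symm
  -- positivity of denominator
  have hDpos : 0 < xt ⬝ᵥ xt := by
    rcases lt_or_eq_of_le (Finset.sum_nonneg (fun i (_ : i ∈ Finset.univ) =>
        mul_self_nonneg (xt i)) : (0:ℝ) ≤ xt ⬝ᵥ xt) with h | h
    · exact h
    · exact absurd (dotProduct_self_eq_zero.mp h.symm) hxtne
  have hα0 : δ ≤ |α 0| := by
    rw [hαdef]
    simpa [dotProduct_comm] using hcomp
  have hδα : δ ^ 2 ≤ α 0 ^ 2 := by
    have := sq_le_sq' (by linarith [abs_nonneg (α 0), neg_abs_le (α 0)] : -(|α 0|) ≤ δ) hα0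
    simpa [sq_abs] using this
  rw [hN, hD]
  have hNnn : 0 ≤ ∑ i, c i * lam i :=
    Finset.sum_nonneg fun i _ => mul_nonneg (hcnn i) (hnn i)
  have hDpos' : 0 < ∑ i, c i := by rwa [hD] at hDpos
  -- trivial case lam 0 = 0
  rcases eq_or_lt_of_le (hnn 0) with hl0 | hl0
  · rw [← hl0]
    simpa using div_nonneg hNnn hDpos'.le
  -- main case
  set μ : ℝ := lam 0 * (1 - ε) with hμdef
  have hμpos : 0 < μ := mul_pos hl0 (by linarith)
  have hμle : μ ≤ lam 0 := by
    nlinarith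
  set S : Finset (Fin (n+1)) := Finset.univ.filter (fun i => μ ≤ lam i) with hS
  set A : ℝ := ∑ i ∈ S, c i with hA
  have h0S : (0 : Fin (n+1)) ∈ S := by
    simp [hS, hμle]
  have hA0 : δ ^ 2 * lam 0 ^ (2 * t) ≤ A := by
    have h1 : δ ^ 2 * lam 0 ^ (2 * t) ≤ c 0 :=
      mul_le_mul_of_nonneg_right hδα (pow_nonneg (hnn 0) _)
    exact h1.trans (Finset.single_le_sum (fun i _ => hcnn i) h0S)
  have hApos : 0 < A :=
    lt_of_lt_of_le (mul_pos (pow_pos hδ 2) (pow_pos hl0 _)) hA0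
  set B : ℝ := μ ^ (2 * t) with hB
  have hBnn : 0 ≤ B := pow_nonneg hμpos.le _
  have hNge : μ * A ≤ ∑ i, c i * lam i := by
    calc μ * A = ∑ i ∈ S, μ * c i := by rw [hA, Finset.mul_sum]
    _ ≤ ∑ i ∈ S, c i * lam i := by
        refine Finset.sum_le_sum fun i hi => ?_
        have hμi : μ ≤ lam i := by
          simp only [hS, Finset.mem_filter] at hi
          exact hi.2
        rw [mul_comm]
        exact mul_le_mul_of_nonneg_left hμi (hcnn i)
    _ ≤ ∑ i, c i * lam i := by
        refine Finset.sum_le_sum_of_subset_of_nonneg (Finset.filter_subset _ _)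
          fun i _ _ => mul_nonneg (hcnn i) (hnn i)
  have hDle : (∑ i, c i) ≤ A + B := by
    have hsplit : (∑ i, c i) = A + ∑ i ∈ Finset.univ.filter (fun i => ¬ μ ≤ lam i), c i := by
      rw [hA, hS]
      exact (Finset.sum_filter_add_sum_filter_not _ _ _).symm
    rw [hsplit]
    refine add_le_add_right ?_ A
    calc ∑ i ∈ Finset.univ.filter (fun i => ¬ μ ≤ lam i), c i
        ≤ ∑ i ∈ Finset.univ.filter (fun i => ¬ μ ≤ lam i), α i ^ 2 * B := by
          refine Finset.sum_le_sum fun i hi => ?_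
          have hlt : lam i < μ := by
            simp only [Finset.mem_filter] at hi
            exact lt_of_not_ge hi.2
          refine mul_le_mul_of_nonneg_left ?_ (sq_nonneg _)
          exact pow_le_pow_left₀ (hnn i) hlt.le _
      _ ≤ ∑ i, α i ^ 2 * B := by
          refine Finset.sum_le_sum_of_subset_of_nonneg (Finset.filter_subset _ _)
            fun i _ _ => mul_nonneg (sq_nonneg _) hBnn
      _ = B := by rw [← Finset.sum_mul, hsum1, one_mul]
  -- chain of inequalities
  have step1 : μ * A / (∑ i, c i) ≤ (∑ i, c i * lam i) / (∑ i, c i) :=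
    (div_le_div_iff_of_pos_right hDpos').mpr hNge
  have step2 : μ * A / (A + B) ≤ μ * A / (∑ i, c i) :=
    div_le_div_of_nonneg_left (mul_nonneg hμpos.le hApos.le) hDpos' hDle
  refine le_trans ?_ (le_trans step2 step1)
  -- final algebra: LHS ≤ μ * A / (A + B)
  have hq : (0:ℝ) ≤ (δ⁻¹) ^ 2 * (1 - ε) ^ (2 * t) :=
    mul_nonneg (sq_nonneg _) (pow_nonneg (by linarith) _)
  have hABpos : 0 < A + B := by linarith
  rw [mul_one_div, div_le_div_iff₀ (by linarith : (0:ℝ) < 1 + (δ⁻¹) ^ 2 * (1 - ε) ^ (2 * t)) hABpos]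
  have hkey : B ≤ A * ((δ⁻¹) ^ 2 * (1 - ε) ^ (2 * t)) := by
    have hBeq : B = (δ ^ 2 * lam 0 ^ (2 * t)) * ((δ⁻¹) ^ 2 * (1 - ε) ^ (2 * t)) := by
      rw [hB, hμdef, mul_pow]
      field_simp
    rw [hBeq]
    exact mul_le_mul_of_nonneg_right hA0 hq
  nlinarith [mul_le_mul_of_nonneg_left hkey hμpos.le]
end
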